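/- Let n ≥ 5. Then every (n-1)-tuple of intransitive subgroups of S_n is regular, while the (n-2)-tuple consisting of n-2 copies of a point stabilizer S_{n-1} is a non-regular tuple of intransitive subgroups of S_n; similarly, every (n-2)-tuple of intransitive subgroups of A_n is regular, while the (n-3)-tuple consisting of n-3 copies of a point stabilizer of A_n is non-regular. That is, R_intrans(S_n) = n-1 and R_intrans(A_n) = n-2. -/

import Mathlib

/-- The conjugate `g H g⁻¹` of a subgroup `H` by an element `g`. -/
def conjSub {G : Type*} [Group G] (g : G) (H : Subgroup G) : Subgroup G :=
  H.map (MulAut.conj g).toMonoidHom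

/-- A `k`-tuple of subgroups is regular if some intersection of conjugates is trivial. -/
def IsRegularTuple {G : Type*} [Group G] {k : ℕ} (H : Fin k → Subgroup G) : Prop :=
  ∃ g : Fin k → G, (⨅ i, conjSub (g i) (H i)) = ⊥

open Finset

lemma sep_lemma {α ι : Type*} [DecidableEq α] [DecidableEq ι] (t : Finset ι) :
    ∀ (s : Finset α) (a : ι → ℕ), s.card = t.card + 1 →
    (∀ i ∈ t, 1 ≤ a i ∧ a i ≤ s.card - 1) →
    ∃ B : ι → Finset α, (∀ i ∈ t, B i ⊆ s ∧ (B i).card = a i) ∧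
      ∀ x ∈ s, ∀ y ∈ s, (∀ i ∈ t, (x ∈ B i ↔ y ∈ B i)) → x = y := by
  classical
  induction t using Finset.induction_on with
  | empty =>
    intro s a hs _
    refine ⟨fun _ => ∅, by simp, ?_⟩
    obtain ⟨z, rfl⟩ := Finset.card_eq_one.mp (by simpa using hs)
    intro x hx y hy _
    simp only [mem_singleton] at hx hy
    rw [hx, hy]
  | @insert i₀ t hi₀ ih =>
    intro s a hs hb
    rw [card_insert_of_notMem hi₀] at hs
    -- pick x₀ ∈ s
    have hsne : s.Nonempty := by rw [← Finset.card_pos]; omega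
    obtain ⟨x₀, hx₀⟩ := hsne
    set s' := s.erase x₀ with hs'def
    have hx₀s' : x₀ ∉ s' := notMem_erase _ _
    have hs'sub : s' ⊆ s := erase_subset _ _
    have hs'card : s'.card = t.card + 1 := by
      rw [hs'def, card_erase_of_mem hx₀]; omega
    set a' : ι → ℕ := fun i => if 2 ≤ a i then a i - 1 else a i with ha'def
    have hb' : ∀ i ∈ t, 1 ≤ a' i ∧ a' i ≤ s'.card - 1 := by
      intro i hi
      have h1 := hb i (mem_insert_of_mem hi)
      have htc : 1 ≤ t.card := card_pos.mpr ⟨i, hi⟩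
      simp only [ha'def]
      split <;> omega
    obtain ⟨B', hB's, hinj⟩ := ih s' a' hs'card hb'
    set B'' : ι → Finset α := fun i => if 2 ≤ a i then insert x₀ (B' i) else B' i
      with hB''def
    have hx₀B' : ∀ i ∈ t, x₀ ∉ B' i := fun i hi h => hx₀s' ((hB's i hi).1 h)
    have hB''mem : ∀ i ∈ t, ∀ x ∈ s', (x ∈ B'' i ↔ x ∈ B' i) := by
      intro i hi x hx
      simp only [hB''def]
      split
      · simp only [mem_insert]
        constructor
        · rintro (rfl | h)
          · exact absurd hx hx₀s'
          · exact h
        · exact Or.inr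
      · exact Iff.rfl
    have hB''x₀ : ∀ i ∈ t, (x₀ ∈ B'' i ↔ 2 ≤ a i) := by
      intro i hi
      by_cases h : 2 ≤ a i
      · simp [hB''def, h]
      · simp [hB''def, h, hx₀B' i hi]
    have hB''card : ∀ i ∈ t, B'' i ⊆ s ∧ (B'' i).card = a i := by
      intro i hi
      have h1 := hb i (mem_insert_of_mem hi)
      have h2 := hB's i hi
      constructor
      · simp only [hB''def]
        split
        · exact insert_subset hx₀ (h2.1.trans hs'sub)
        · exact h2.1.trans hs'sub
      · by_cases h : 2 ≤ a i
        · simp only [hB''def, if_pos h]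
          rw [card_insert_of_notMem (hx₀B' i hi), h2.2]
          simp only [ha'def]
          rw [if_pos h]; omega
        · simp only [hB''def, if_neg h]
          rw [h2.2]; simp only [ha'def]; rw [if_neg h]
    have ha₀ := hb i₀ (mem_insert_self i₀ t)
    by_cases hm : ∃ y ∈ s', ∀ i ∈ t, (y ∈ B' i ↔ 2 ≤ a i)
    · obtain ⟨y, hys', hymatch⟩ := hm
      have hyx₀ : y ≠ x₀ := fun h => hx₀s' (h ▸ hys')
      have hcard2 : a i₀ - 1 ≤ (s \ {x₀, y}).card := by
        rw [card_sdiff_of_subset (by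
          intro z hz
          simp only [mem_insert, mem_singleton] at hz
          rcases hz with rfl | rfl
          exacts [hx₀, hs'sub hys'])]
        rw [card_pair (Ne.symm hyx₀)]
        omega
      obtain ⟨u, hu, hucard⟩ := Finset.exists_subset_card_eq hcard2
      have hx₀u : x₀ ∉ u := fun h => by
        have := hu h; simp at this
      have hyu : y ∉ u := fun h => by
        have := hu h; simp at this
      set B₀ : Finset α := insert x₀ u with hB₀def
      have hB₀sub : B₀ ⊆ s := insert_subset hx₀ (hu.trans (sdiff_subset))
      have hB₀card : B₀.card = a i₀ := by
        rw [hB₀def, card_insert_of_notMem hx₀u, hucard]; omega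
      have hx₀B₀ : x₀ ∈ B₀ := mem_insert_self _ _
      have hyB₀ : y ∉ B₀ := by
        simp only [hB₀def, mem_insert]
        rintro (rfl | h)
        · exact hyx₀ rfl
        · exact hyu h
      set B : ι → Finset α := fun i => if i = i₀ then B₀ else B'' i with hBdef
      have hBi : ∀ i ∈ t, B i = B'' i := by
        intro i hi
        simp only [hBdef]
        exact if_neg (fun h : i = i₀ => hi₀ (h ▸ hi))
      refine ⟨B, ?_, ?_⟩
      · intro i hi
        rcases mem_insert.mp hi with rfl | hi
        · simp only [hBdef, if_pos rfl]
          exact ⟨hB₀sub, hB₀card⟩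
        · rw [hBi i hi]; exact hB''card i hi
      · intro x hx z hz hagree
        by_cases hxx₀ : x = x₀ <;> by_cases hzx₀ : z = x₀
        · rw [hxx₀, hzx₀]
        · -- x = x₀, z ∈ s'
          exfalso
          subst hxx₀
          have hzs' : z ∈ s' := mem_erase.mpr ⟨hzx₀, hz⟩
          have hzmatch : ∀ i ∈ t, (z ∈ B' i ↔ 2 ≤ a i) := by
            intro i hi
            rw [← hB''mem i hi z hzs', ← hBi i hi, ← hagree i (mem_insert_of_mem hi),
              hBi i hi, hB''x₀ i hi]
          have : z = y := hinj z hzs' y hys' (by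
            intro i hi; rw [hzmatch i hi, hymatch i hi])
          subst this
          have := hagree i₀ (mem_insert_self _ _)
          simp only [hBdef, if_pos rfl] at this
          exact hyB₀ (this.mp hx₀B₀)
        · exfalso
          subst hzx₀
          have hxs' : x ∈ s' := mem_erase.mpr ⟨hxx₀, hx⟩
          have hxmatch : ∀ i ∈ t, (x ∈ B' i ↔ 2 ≤ a i) := by
            intro i hi
            rw [← hB''mem i hi x hxs', ← hBi i hi, hagree i (mem_insert_of_mem hi),
              hBi i hi, hB''x₀ i hi]
          have : x = y := hinj x hxs' y hys' (by
            intro i hi; rw [hxmatch i hi, hymatch i hi])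
          subst this
          have := hagree i₀ (mem_insert_self _ _)
          simp only [hBdef, if_pos rfl] at this
          exact hyB₀ (this.mpr hx₀B₀)
        · exact hinj x (mem_erase.mpr ⟨hxx₀, hx⟩) z (mem_erase.mpr ⟨hzx₀, hz⟩) (by
            intro i hi
            rw [← hB''mem i hi x (mem_erase.mpr ⟨hxx₀, hx⟩),
              ← hB''mem i hi z (mem_erase.mpr ⟨hzx₀, hz⟩), ← hBi i hi]
            exact hagree i (mem_insert_of_mem hi))
    · -- no match
      obtain ⟨B₀, hB₀sub, hB₀card⟩ := Finset.exists_subset_card_eq (s := s) (n := a i₀) (by omega)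
      set B : ι → Finset α := fun i => if i = i₀ then B₀ else B'' i with hBdef
      have hBi : ∀ i ∈ t, B i = B'' i := by
        intro i hi
        simp only [hBdef]
        exact if_neg (fun h : i = i₀ => hi₀ (h ▸ hi))
      refine ⟨B, ?_, ?_⟩
      · intro i hi
        rcases mem_insert.mp hi with rfl | hi
        · simp only [hBdef, if_pos rfl]
          exact ⟨hB₀sub, hB₀card⟩
        · rw [hBi i hi]; exact hB''card i hi
      · intro x hx z hz hagree
        by_cases hxx₀ : x = x₀ <;> by_cases hzx₀ : z = x₀
        · rw [hxx₀, hzx₀]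
        · exfalso
          subst hxx₀
          have hzs' : z ∈ s' := mem_erase.mpr ⟨hzx₀, hz⟩
          refine hm ⟨z, hzs', ?_⟩
          intro i hi
          rw [← hB''mem i hi z hzs', ← hBi i hi, ← hagree i (mem_insert_of_mem hi),
            hBi i hi, hB''x₀ i hi]
        · exfalso
          subst hzx₀
          have hxs' : x ∈ s' := mem_erase.mpr ⟨hxx₀, hx⟩
          refine hm ⟨x, hxs', ?_⟩
          intro i hi
          rw [← hB''mem i hi x hxs', ← hBi i hi, hagree i (mem_insert_of_mem hi),
            hBi i hi, hB''x₀ i hi]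
        · exact hinj x (mem_erase.mpr ⟨hxx₀, hx⟩) z (mem_erase.mpr ⟨hzx₀, hz⟩) (by
            intro i hi
            rw [← hB''mem i hi x (mem_erase.mpr ⟨hxx₀, hx⟩),
              ← hB''mem i hi z (mem_erase.mpr ⟨hzx₀, hz⟩), ← hBi i hi]
            exact hagree i (mem_insert_of_mem hi))

lemma sep_lemma2 {α ι : Type*} [DecidableEq α] [DecidableEq ι] (t : Finset ι) :
    ∀ (s : Finset α) (a : ι → ℕ), s.card = t.card + 2 →
    (∀ i ∈ t, 1 ≤ a i ∧ a i ≤ s.card - 1) →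
    ∃ B : ι → Finset α, (∀ i ∈ t, B i ⊆ s ∧ (B i).card = a i) ∧
      ∃ p q : α, ∀ x ∈ s, ∀ y ∈ s, (∀ i ∈ t, (x ∈ B i ↔ y ∈ B i)) →
        x = y ∨ (x = p ∧ y = q) ∨ (x = q ∧ y = p) := by
  classical
  induction t using Finset.induction_on with
  | empty =>
    intro s a hs _
    obtain ⟨p, q, hpq, rfl⟩ := Finset.card_eq_two.mp (by simpa using hs)
    refine ⟨fun _ => ∅, by simp, p, q, ?_⟩
    intro x hx y hy _
    simp only [Finset.mem_insert, Finset.mem_singleton] at hx hy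
    rcases hx with rfl | rfl <;> rcases hy with rfl | rfl <;> tauto
  | @insert i₀ t hi₀ ih =>
    intro s a hs hb
    rw [Finset.card_insert_of_notMem hi₀] at hs
    have hsne : s.Nonempty := by rw [← Finset.card_pos]; omega
    obtain ⟨x₀, hx₀⟩ := hsne
    set s' := s.erase x₀ with hs'def
    have hx₀s' : x₀ ∉ s' := Finset.notMem_erase _ _
    have hs'sub : s' ⊆ s := Finset.erase_subset _ _
    have hs'card : s'.card = t.card + 2 := by
      rw [hs'def, Finset.card_erase_of_mem hx₀]; omega
    set a' : ι → ℕ := fun i => if 2 ≤ a i then a i - 1 else a i with ha'def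
    have hb' : ∀ i ∈ t, 1 ≤ a' i ∧ a' i ≤ s'.card - 1 := by
      intro i hi
      have h1 := hb i (Finset.mem_insert_of_mem hi)
      simp only [ha'def]
      split <;> omega
    obtain ⟨B', hB's, p', q', hinj⟩ := ih s' a' hs'card hb'
    set B'' : ι → Finset α := fun i => if 2 ≤ a i then insert x₀ (B' i) else B' i
      with hB''def
    have hx₀B' : ∀ i ∈ t, x₀ ∉ B' i := fun i hi h => hx₀s' ((hB's i hi).1 h)
    have hB''mem : ∀ i ∈ t, ∀ x ∈ s', (x ∈ B'' i ↔ x ∈ B' i) := by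
      intro i hi x hx
      simp only [hB''def]
      split
      · simp only [Finset.mem_insert]
        constructor
        · rintro (rfl | h)
          · exact absurd hx hx₀s'
          · exact h
        · exact Or.inr
      · exact Iff.rfl
    have hB''x₀ : ∀ i ∈ t, (x₀ ∈ B'' i ↔ 2 ≤ a i) := by
      intro i hi
      by_cases h : 2 ≤ a i
      · simp [hB''def, h]
      · simp [hB''def, h, hx₀B' i hi]
    have hB''card : ∀ i ∈ t, B'' i ⊆ s ∧ (B'' i).card = a i := by
      intro i hi
      have h1 := hb i (Finset.mem_insert_of_mem hi)
      have h2 := hB's i hi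
      constructor
      · by_cases h : 2 ≤ a i
        · simp only [hB''def, if_pos h]
          exact Finset.insert_subset hx₀ (h2.1.trans hs'sub)
        · simp only [hB''def, if_neg h]
          exact h2.1.trans hs'sub
      · by_cases h : 2 ≤ a i
        · simp only [hB''def, if_pos h]
          rw [Finset.card_insert_of_notMem (hx₀B' i hi), h2.2]
          simp only [ha'def]
          rw [if_pos h]; omega
        · simp only [hB''def, if_neg h]
          rw [h2.2]; simp only [ha'def]; rw [if_neg h]
    have ha₀ := hb i₀ (Finset.mem_insert_self i₀ t)
    -- helper: from agreement on `insert i₀ t`, an s'-element agreeing with x₀ matches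
    by_cases hm : ∃ y ∈ s', ∀ i ∈ t, (y ∈ B' i ↔ 2 ≤ a i)
    · obtain ⟨y, hys', hymatch⟩ := hm
      have hyx₀ : y ≠ x₀ := fun h => hx₀s' (h ▸ hys')
      by_cases hm2 : ∃ z ∈ s', z ≠ y ∧ ∀ i ∈ t, (z ∈ B' i ↔ 2 ≤ a i)
      · -- two matches y z
        obtain ⟨z, hzs', hzy, hzmatch⟩ := hm2
        have hzx₀ : z ≠ x₀ := fun h => hx₀s' (h ▸ hzs')
        have hcard2 : a i₀ - 1 ≤ (s \ {y, z}).card := by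
          rw [Finset.card_sdiff_of_subset (by
            intro w hw
            simp only [Finset.mem_insert, Finset.mem_singleton] at hw
            rcases hw with rfl | rfl
            exacts [hs'sub hys', hs'sub hzs'])]
          rw [Finset.card_pair (fun h => hzy h.symm)]
          omega
        obtain ⟨u, hu, hucard⟩ := Finset.exists_subset_card_eq hcard2
        have hyu : y ∉ u := fun h => by have := hu h; simp at this
        have hzu : z ∉ u := fun h => by have := hu h; simp at this
        set B₀ : Finset α := insert y u with hB₀def
        have hB₀sub : B₀ ⊆ s := Finset.insert_subset (hs'sub hys')
          (hu.trans Finset.sdiff_subset)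
        have hB₀card : B₀.card = a i₀ := by
          rw [hB₀def, Finset.card_insert_of_notMem hyu, hucard]; omega
        have hyB₀ : y ∈ B₀ := Finset.mem_insert_self _ _
        have hzB₀ : z ∉ B₀ := by
          simp only [hB₀def, Finset.mem_insert]
          rintro (rfl | h)
          · exact hzy rfl
          · exact hzu h
        set B : ι → Finset α := fun i => if i = i₀ then B₀ else B'' i with hBdef
        have hBi : ∀ i ∈ t, B i = B'' i := by
          intro i hi
          simp only [hBdef]
          exact if_neg (fun h : i = i₀ => hi₀ (h ▸ hi))
        have hBi₀ : B i₀ = B₀ := by simp only [hBdef, if_pos rfl]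
        -- matches are exactly y and z (which are {p',q'})
        have hmatchyz : ∀ w ∈ s', (∀ i ∈ t, (w ∈ B' i ↔ 2 ≤ a i)) → w = y ∨ w = z := by
          intro w hws' hwm
          rcases hinj w hws' y hys' (fun i hi => by rw [hwm i hi, hymatch i hi]) with
            h | h | h
          · exact Or.inl h
          · -- w = p', y = q'
            rcases hinj w hws' z hzs' (fun i hi => by rw [hwm i hi, hzmatch i hi]) with
              h2 | h2 | h2
            · exact Or.inr h2
            · -- w = p', z = q' ⇒ y = z contra
              exact absurd (h2.2.trans h.2.symm) hzy
            · exact Or.inl (h2.1.trans h.2.symm)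
          · rcases hinj w hws' z hzs' (fun i hi => by rw [hwm i hi, hzmatch i hi]) with
              h2 | h2 | h2
            · exact Or.inr h2
            · exact Or.inl (h2.1.trans h.2.symm)
            · exact absurd (h2.2.trans h.2.symm) hzy
        refine ⟨B, ?_, x₀, (if x₀ ∈ B₀ then y else z), ?_⟩
        · intro i hi
          rcases Finset.mem_insert.mp hi with rfl | hi
          · rw [hBi₀]; exact ⟨hB₀sub, hB₀card⟩
          · rw [hBi i hi]; exact hB''card i hi
        · intro x hx w hw hagree
          by_cases hxx₀ : x = x₀ <;> by_cases hwx₀ : w = x₀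
          · exact Or.inl (hxx₀.trans hwx₀.symm)
          · -- x = x₀, w ∈ s'
            subst hxx₀
            have hws' : w ∈ s' := Finset.mem_erase.mpr ⟨hwx₀, hw⟩
            have hwm : ∀ i ∈ t, (w ∈ B' i ↔ 2 ≤ a i) := by
              intro i hi
              rw [← hB''mem i hi w hws', ← hBi i hi, ← hagree i (Finset.mem_insert_of_mem hi),
                hBi i hi, hB''x₀ i hi]
            have hagree₀ := hagree i₀ (Finset.mem_insert_self _ _)
            rw [hBi₀] at hagree₀
            rcases hmatchyz w hws' hwm with rfl | rfl
            · -- w = y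
              have hxB : x ∈ B₀ := hagree₀.mpr hyB₀
              rw [if_pos hxB]
              exact Or.inr (Or.inl ⟨rfl, rfl⟩)
            · have hxB : x ∉ B₀ := fun h => hzB₀ (hagree₀.mp h)
              rw [if_neg hxB]
              exact Or.inr (Or.inl ⟨rfl, rfl⟩)
          · subst hwx₀
            have hxs' : x ∈ s' := Finset.mem_erase.mpr ⟨hxx₀, hx⟩
            have hxm : ∀ i ∈ t, (x ∈ B' i ↔ 2 ≤ a i) := by
              intro i hi
              rw [← hB''mem i hi x hxs', ← hBi i hi, hagree i (Finset.mem_insert_of_mem hi),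
                hBi i hi, hB''x₀ i hi]
            have hagree₀ := hagree i₀ (Finset.mem_insert_self _ _)
            rw [hBi₀] at hagree₀
            rcases hmatchyz x hxs' hxm with rfl | rfl
            · have hwB : w ∈ B₀ := hagree₀.mp hyB₀
              rw [if_pos hwB]
              exact Or.inr (Or.inr ⟨rfl, rfl⟩)
            · have hwB : w ∉ B₀ := fun h => hzB₀ (hagree₀.mpr h)
              rw [if_neg hwB]
              exact Or.inr (Or.inr ⟨rfl, rfl⟩)
          · -- both in s'
            have hxs' : x ∈ s' := Finset.mem_erase.mpr ⟨hxx₀, hx⟩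
            have hws' : w ∈ s' := Finset.mem_erase.mpr ⟨hwx₀, hw⟩
            have hagt : ∀ i ∈ t, (x ∈ B' i ↔ w ∈ B' i) := by
              intro i hi
              rw [← hB''mem i hi x hxs', ← hB''mem i hi w hws', ← hBi i hi]
              exact hagree i (Finset.mem_insert_of_mem hi)
            rcases hinj x hxs' w hws' hagt with h | h | h
            · exact Or.inl h
            all_goals {
              exfalso
              -- x,w = {p',q'}; but y,z are also {p',q'} (distinct matches), and B₀ separates
              -- show x,w ∈ {y,z} : both x,w match? No—instead: y,z agree with p',q'.
              -- We know y ≠ z and both match, so by hinj {y,z}={p',q'} as a set.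
              rcases hinj y hys' z hzs' (fun i hi => by rw [hymatch i hi, hzmatch i hi]) with
                hyz | hyz | hyz
              · exact hzy hyz.symm
              all_goals {
                first
                | (have hxy : x = y ∧ w = z := by
                      constructor
                      · exact h.1.trans hyz.1.symm
                      · exact h.2.trans hyz.2.symm
                   obtain ⟨rfl, rfl⟩ := hxy
                   have := hagree i₀ (Finset.mem_insert_self _ _)
                   rw [hBi₀] at this
                   exact hzB₀ (this.mp hyB₀))
                | (have hxy : x = z ∧ w = y := by
                      constructor
                      · exact h.1.trans hyz.2.symm
                      · exact h.2.trans hyz.1.symm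
                   obtain ⟨rfl, rfl⟩ := hxy
                   have := hagree i₀ (Finset.mem_insert_self _ _)
                   rw [hBi₀] at this
                   exact hzB₀ (this.mpr hyB₀))
              }
            }
      · -- unique match y
        have hcard2 : a i₀ - 1 ≤ (s \ {x₀, y}).card := by
          rw [Finset.card_sdiff_of_subset (by
            intro w hw
            simp only [Finset.mem_insert, Finset.mem_singleton] at hw
            rcases hw with rfl | rfl
            exacts [hx₀, hs'sub hys'])]
          rw [Finset.card_pair (Ne.symm hyx₀)]
          omega
        obtain ⟨u, hu, hucard⟩ := Finset.exists_subset_card_eq hcard2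
        have hx₀u : x₀ ∉ u := fun h => by have := hu h; simp at this
        have hyu : y ∉ u := fun h => by have := hu h; simp at this
        set B₀ : Finset α := insert x₀ u with hB₀def
        have hB₀sub : B₀ ⊆ s := Finset.insert_subset hx₀ (hu.trans Finset.sdiff_subset)
        have hB₀card : B₀.card = a i₀ := by
          rw [hB₀def, Finset.card_insert_of_notMem hx₀u, hucard]; omega
        have hx₀B₀ : x₀ ∈ B₀ := Finset.mem_insert_self _ _
        have hyB₀ : y ∉ B₀ := by
          simp only [hB₀def, Finset.mem_insert]
          rintro (rfl | h)
          · exact hyx₀ rfl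
          · exact hyu h
        set B : ι → Finset α := fun i => if i = i₀ then B₀ else B'' i with hBdef
        have hBi : ∀ i ∈ t, B i = B'' i := by
          intro i hi
          simp only [hBdef]
          exact if_neg (fun h : i = i₀ => hi₀ (h ▸ hi))
        have hBi₀ : B i₀ = B₀ := by simp only [hBdef, if_pos rfl]
        refine ⟨B, ?_, p', q', ?_⟩
        · intro i hi
          rcases Finset.mem_insert.mp hi with rfl | hi
          · rw [hBi₀]; exact ⟨hB₀sub, hB₀card⟩
          · rw [hBi i hi]; exact hB''card i hi
        · intro x hx w hw hagree
          by_cases hxx₀ : x = x₀ <;> by_cases hwx₀ : w = x₀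
          · exact Or.inl (hxx₀.trans hwx₀.symm)
          · exfalso
            subst hxx₀
            have hws' : w ∈ s' := Finset.mem_erase.mpr ⟨hwx₀, hw⟩
            have hwm : ∀ i ∈ t, (w ∈ B' i ↔ 2 ≤ a i) := by
              intro i hi
              rw [← hB''mem i hi w hws', ← hBi i hi, ← hagree i (Finset.mem_insert_of_mem hi),
                hBi i hi, hB''x₀ i hi]
            have hwy : w = y := by
              by_contra hne
              exact hm2 ⟨w, hws', hne, hwm⟩
            subst hwy
            have := hagree i₀ (Finset.mem_insert_self _ _)
            rw [hBi₀] at this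
            exact hyB₀ (this.mp hx₀B₀)
          · exfalso
            subst hwx₀
            have hxs' : x ∈ s' := Finset.mem_erase.mpr ⟨hxx₀, hx⟩
            have hxm : ∀ i ∈ t, (x ∈ B' i ↔ 2 ≤ a i) := by
              intro i hi
              rw [← hB''mem i hi x hxs', ← hBi i hi, hagree i (Finset.mem_insert_of_mem hi),
                hBi i hi, hB''x₀ i hi]
            have hxy : x = y := by
              by_contra hne
              exact hm2 ⟨x, hxs', hne, hxm⟩
            subst hxy
            have := hagree i₀ (Finset.mem_insert_self _ _)
            rw [hBi₀] at this
            exact hyB₀ (this.mpr hx₀B₀)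
          · exact hinj x (Finset.mem_erase.mpr ⟨hxx₀, hx⟩) w (Finset.mem_erase.mpr ⟨hwx₀, hw⟩)
              (by
                intro i hi
                rw [← hB''mem i hi x (Finset.mem_erase.mpr ⟨hxx₀, hx⟩),
                  ← hB''mem i hi w (Finset.mem_erase.mpr ⟨hwx₀, hw⟩), ← hBi i hi]
                exact hagree i (Finset.mem_insert_of_mem hi))
    · -- no match
      obtain ⟨B₀, hB₀sub, hB₀card⟩ := Finset.exists_subset_card_eq (s := s) (n := a i₀) (by omega)
      set B : ι → Finset α := fun i => if i = i₀ then B₀ else B'' i with hBdef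
      have hBi : ∀ i ∈ t, B i = B'' i := by
        intro i hi
        simp only [hBdef]
        exact if_neg (fun h : i = i₀ => hi₀ (h ▸ hi))
      refine ⟨B, ?_, p', q', ?_⟩
      · intro i hi
        rcases Finset.mem_insert.mp hi with rfl | hi
        · simp only [hBdef, if_pos rfl]
          exact ⟨hB₀sub, hB₀card⟩
        · rw [hBi i hi]; exact hB''card i hi
      · intro x hx w hw hagree
        by_cases hxx₀ : x = x₀ <;> by_cases hwx₀ : w = x₀
        · exact Or.inl (hxx₀.trans hwx₀.symm)
        · exfalso
          subst hxx₀
          have hws' : w ∈ s' := Finset.mem_erase.mpr ⟨hwx₀, hw⟩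
          refine hm ⟨w, hws', ?_⟩
          intro i hi
          rw [← hB''mem i hi w hws', ← hBi i hi, ← hagree i (Finset.mem_insert_of_mem hi),
            hBi i hi, hB''x₀ i hi]
        · exfalso
          subst hwx₀
          have hxs' : x ∈ s' := Finset.mem_erase.mpr ⟨hxx₀, hx⟩
          refine hm ⟨x, hxs', ?_⟩
          intro i hi
          rw [← hB''mem i hi x hxs', ← hBi i hi, hagree i (Finset.mem_insert_of_mem hi),
            hBi i hi, hB''x₀ i hi]
        · exact hinj x (Finset.mem_erase.mpr ⟨hxx₀, hx⟩) w (Finset.mem_erase.mpr ⟨hwx₀, hw⟩)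
            (by
              intro i hi
              rw [← hB''mem i hi x (Finset.mem_erase.mpr ⟨hxx₀, hx⟩),
                ← hB''mem i hi w (Finset.mem_erase.mpr ⟨hwx₀, hw⟩), ← hBi i hi]
              exact hagree i (Finset.mem_insert_of_mem hi))


lemma mem_conjSub {G : Type*} [Group G] {g σ : G} {H : Subgroup G} :
    σ ∈ conjSub g H ↔ ∃ h ∈ H, g * h * g⁻¹ = σ := by
  simp [conjSub, Subgroup.mem_map, MulAut.conj_apply]

lemma stab_conj {G α : Type*} [Group G] [MulAction G α] (H : Subgroup G) (O B : Finset α)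
    (hinv : ∀ h ∈ H, ∀ z, h • z ∈ O ↔ z ∈ O) (g : G) (hg : ∀ x, g • x ∈ B ↔ x ∈ O) :
    ∀ σ ∈ conjSub g H, ∀ z, σ • z ∈ B ↔ z ∈ B := by
  intro σ hσ z
  obtain ⟨h, hh, rfl⟩ := mem_conjSub.mp hσ
  have e1 : (g * h * g⁻¹) • z = g • (h • (g⁻¹ • z)) := by
    rw [mul_smul, mul_smul]
  rw [e1, hg, hinv h hh, ← hg, smul_inv_smul]

lemma exists_invariant_finset {G α : Type*} [Group G] [MulAction G α] [Fintype α]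
    [DecidableEq α] (H : Subgroup G) (h : ¬ MulAction.IsPretransitive ↥H α) :
    ∃ O : Finset α, 0 < O.card ∧ O.card < Fintype.card α ∧
      ∀ h ∈ H, ∀ z, h • z ∈ O ↔ z ∈ O := by
  classical
  have : ¬ ∀ x y : α, ∃ g : ↥H, g • x = y := fun hh => h ⟨hh⟩
  push_neg at this
  obtain ⟨x, y, hxy⟩ := this
  refine ⟨(MulAction.orbit ↥H x).toFinset, ?_, ?_, ?_⟩
  · rw [Finset.card_pos]
    exact ⟨x, Set.mem_toFinset.mpr (MulAction.mem_orbit_self x)⟩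
  · rw [Finset.card_lt_iff_ne_univ]
    intro hu
    have : y ∈ (MulAction.orbit ↥H x).toFinset := hu ▸ Finset.mem_univ y
    rw [Set.mem_toFinset] at this
    obtain ⟨g, hg⟩ := this
    exact hxy g hg
  · intro h hh z
    simp only [Set.mem_toFinset, MulAction.mem_orbit_iff]
    constructor
    · rintro ⟨u, hu⟩
      refine ⟨(⟨h, hh⟩ : ↥H)⁻¹ * u, ?_⟩
      rw [mul_smul, hu]
      have e2 : h • z = (⟨h, hh⟩ : ↥H) • z := (Submonoid.mk_smul h hh z).symm
      rw [e2, inv_smul_smul]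
    · rintro ⟨u, hu⟩
      refine ⟨(⟨h, hh⟩ : ↥H) * u, ?_⟩
      rw [mul_smul, hu, Submonoid.mk_smul]

lemma exists_perm_map {α : Type*} [Fintype α] [DecidableEq α] (O B : Finset α)
    (hcard : O.card = B.card) :
    ∃ g : Equiv.Perm α, ∀ x, g x ∈ B ↔ x ∈ O := by
  classical
  have e : {x // x ∈ O} ≃ {x // x ∈ B} := Finset.equivOfCardEq hcard
  refine ⟨Equiv.extendSubtype e, fun x => ?_⟩
  constructor
  · intro hx
    by_contra hxO
    exact Equiv.extendSubtype_not_mem e x hxO hx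
  · exact Equiv.extendSubtype_mem e x

lemma swap_mem_iff {α : Type*} [DecidableEq α] (O : Finset α) {u v : α}
    (h : u ∈ O ↔ v ∈ O) : ∀ x, Equiv.swap u v x ∈ O ↔ x ∈ O := by
  intro x
  by_cases hu : x = u
  · subst hu; rw [Equiv.swap_apply_left]; exact h.symm
  by_cases hv : x = v
  · subst hv; rw [Equiv.swap_apply_right]; exact h
  · rw [Equiv.swap_apply_of_ne_of_ne hu hv]

lemma exists_perm_map_even {α : Type*} [Fintype α] [DecidableEq α] (O B : Finset α)
    (hcard : O.card = B.card) (h3 : 3 ≤ Fintype.card α) :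
    ∃ g : Equiv.Perm α, Equiv.Perm.sign g = 1 ∧ ∀ x, g x ∈ B ↔ x ∈ O := by
  classical
  obtain ⟨g₀, hg₀⟩ := exists_perm_map O B hcard
  rcases Int.units_eq_one_or (Equiv.Perm.sign g₀) with hs | hs
  · exact ⟨g₀, hs, hg₀⟩
  · -- find u ≠ v on the same side of O
    have : ∃ u v : α, u ≠ v ∧ (u ∈ O ↔ v ∈ O) := by
      by_cases h2 : 2 ≤ O.card
      · obtain ⟨u, hu, v, hv, huv⟩ := Finset.one_lt_card.mp h2
        exact ⟨u, v, huv, by simp [hu, hv]⟩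
      · have : 2 ≤ Oᶜ.card := by
          rw [Finset.card_compl]; omega
        obtain ⟨u, hu, v, hv, huv⟩ := Finset.one_lt_card.mp this
        rw [Finset.mem_compl] at hu hv
        exact ⟨u, v, huv, by simp [hu, hv]⟩
    obtain ⟨u, v, huv, hmem⟩ := this
    refine ⟨g₀ * Equiv.swap u v, ?_, fun x => ?_⟩
    · rw [map_mul, hs, Equiv.Perm.sign_swap huv]
      decide
    · have : (g₀ * Equiv.swap u v) x = g₀ (Equiv.swap u v x) := rfl
      rw [this, hg₀, swap_mem_iff O hmem]

lemma eq_swap_of_rows {α : Type*} [DecidableEq α] (σ : Equiv.Perm α) (p q : α) (hpq : p ≠ q)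
    (hq : σ q = p)
    (hrow : ∀ w, σ w = w ∨ (σ w = p ∧ w = q) ∨ (σ w = q ∧ w = p)) :
    σ = Equiv.swap p q := by
  have hp : σ p = q := by
    rcases hrow p with h | h | h
    · exact absurd (σ.injective (hq.trans h.symm)).symm hpq
    · exact absurd h.2 hpq
    · exact h.1
  ext w
  by_cases hwp : w = p
  · subst hwp; rw [Equiv.swap_apply_left]; exact hp
  by_cases hwq : w = q
  · subst hwq; rw [Equiv.swap_apply_right]; exact hq
  · rw [Equiv.swap_apply_of_ne_of_ne hwp hwq]
    rcases hrow w with h | h | h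
    · exact h
    · exact absurd h.2 hwq
    · exact absurd h.2 hwp


theorem regularity_number_intransitive (n : ℕ) (hn : 5 ≤ n) :
    -- every (n-1)-tuple of intransitive subgroups of Sₙ is regular
    (∀ H : Fin (n - 1) → Subgroup (Equiv.Perm (Fin n)),
        (∀ i, ¬ MulAction.IsPretransitive ↥(H i) (Fin n)) → IsRegularTuple H) ∧
    -- the point stabiliser Sₙ₋₁ is intransitive, and n-2 copies of it form a
    -- non-regular tuple
    (∀ a : Fin n,
      ¬ MulAction.IsPretransitive
          ↥(MulAction.stabilizer (Equiv.Perm (Fin n)) a) (Fin n) ∧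
      ∀ g : Fin (n - 2) → Equiv.Perm (Fin n),
        (⨅ i, conjSub (g i) (MulAction.stabilizer (Equiv.Perm (Fin n)) a)) ≠ ⊥) ∧
    -- every (n-2)-tuple of intransitive subgroups of Aₙ is regular
    (∀ H : Fin (n - 2) → Subgroup ↥(alternatingGroup (Fin n)),
        (∀ i, ¬ MulAction.IsPretransitive ↥(H i) (Fin n)) → IsRegularTuple H) ∧
    -- the point stabiliser in Aₙ is intransitive, and n-3 copies of it form a
    -- non-regular tuple
    (∀ a : Fin n,
      ¬ MulAction.IsPretransitive
          ↥(MulAction.stabilizer ↥(alternatingGroup (Fin n)) a) (Fin n) ∧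
      ∀ g : Fin (n - 3) → ↥(alternatingGroup (Fin n)),
        (⨅ i, conjSub (g i)
          (MulAction.stabilizer ↥(alternatingGroup (Fin n)) a)) ≠ ⊥) := by
  classical
  have hcardn : Fintype.card (Fin n) = n := Fintype.card_fin n
  haveI : Nontrivial (Fin n) :=
    Fintype.one_lt_card_iff_nontrivial.mp (by rw [hcardn]; omega)
  refine ⟨?_, ?_, ?_, ?_⟩
  · -- part 1 : Sₙ
    intro H hH
    have hO := fun i => exists_invariant_finset (H := H i) (hH i)
    choose O hO1 hO2 hO3 using hO
    obtain ⟨B, hBc, hinj⟩ := sep_lemma (Finset.univ : Finset (Fin (n-1)))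
      (Finset.univ : Finset (Fin n)) (fun i => (O i).card)
      (by simp only [Finset.card_univ, hcardn, Fintype.card_fin]; omega)
      (by
        intro i _
        have h2 := hO2 i
        rw [hcardn] at h2
        refine ⟨hO1 i, ?_⟩
        show (O i).card ≤ (Finset.univ : Finset (Fin n)).card - 1
        rw [Finset.card_univ, hcardn]
        omega)
    have hg := fun i => exists_perm_map (O i) (B i)
      ((hBc i (Finset.mem_univ i)).2.symm)
    choose g hg using hg
    refine ⟨g, ?_⟩
    rw [Subgroup.eq_bot_iff_forall]
    intro σ hσ
    rw [Subgroup.mem_iInf] at hσ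
    have hfix : ∀ z, σ z = z := by
      intro z
      refine hinj (σ z) (Finset.mem_univ _) z (Finset.mem_univ _) ?_
      intro i _
      exact stab_conj (H i) (O i) (B i) (hO3 i) (g i) (hg i) σ (hσ i) z
    exact Equiv.ext hfix
  · -- part 2 : stabiliser in Sₙ
    intro a
    constructor
    · intro htrans
      obtain ⟨b, hb⟩ := exists_ne a
      obtain ⟨u, hu⟩ := htrans.exists_smul_eq a b
      have h1 : (↑u : Equiv.Perm (Fin n)) • a = a := u.2
      have h2 : u • a = (↑u : Equiv.Perm (Fin n)) • a := rfl
      rw [h2, h1] at hu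
      exact hb hu.symm
    · intro g hbot
      set S : Finset (Fin n) := Finset.univ.image (fun i => g i a) with hSdef
      have hScard : S.card ≤ n - 2 := le_trans Finset.card_image_le (by
        rw [Finset.card_univ, Fintype.card_fin])
      have h2 : 1 < Sᶜ.card := by
        rw [Finset.card_compl, hcardn]; omega
      obtain ⟨u, hu, v, hv, huv⟩ := Finset.one_lt_card.mp h2
      rw [Finset.mem_compl] at hu hv
      have hmemS : ∀ i, g i a ∈ S := fun i =>
        Finset.mem_image.mpr ⟨i, Finset.mem_univ i, rfl⟩
      have hmem : Equiv.swap u v ∈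
          ⨅ i, conjSub (g i) (MulAction.stabilizer (Equiv.Perm (Fin n)) a) := by
        rw [Subgroup.mem_iInf]
        intro i
        rw [mem_conjSub]
        refine ⟨(g i)⁻¹ * Equiv.swap u v * g i, ?_, by group⟩
        rw [MulAction.mem_stabilizer_iff]
        show ((g i)⁻¹ * (Equiv.swap u v * g i)) a = a
        rw [Equiv.Perm.mul_apply, Equiv.Perm.mul_apply,
          Equiv.swap_apply_of_ne_of_ne (fun h => hu (by rw [← h]; exact hmemS i))
            (fun h => hv (by rw [← h]; exact hmemS i)),
          ← Equiv.Perm.mul_apply, inv_mul_cancel, Equiv.Perm.one_apply]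
      rw [hbot, Subgroup.mem_bot] at hmem
      have : Equiv.swap u v u = u := by rw [hmem]; rfl
      rw [Equiv.swap_apply_left] at this
      exact huv this.symm
  · -- part 3 : Aₙ
    intro H hH
    have hO := fun i => exists_invariant_finset (H := H i) (hH i)
    choose O hO1 hO2 hO3 using hO
    obtain ⟨B, hBc, p, q, hinj⟩ := sep_lemma2 (Finset.univ : Finset (Fin (n-2)))
      (Finset.univ : Finset (Fin n)) (fun i => (O i).card)
      (by simp only [Finset.card_univ, hcardn, Fintype.card_fin]; omega)
      (by
        intro i _
        have h2 := hO2 i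
        rw [hcardn] at h2
        refine ⟨hO1 i, ?_⟩
        show (O i).card ≤ (Finset.univ : Finset (Fin n)).card - 1
        rw [Finset.card_univ, hcardn]
        omega)
    have hg := fun i => exists_perm_map_even (O i) (B i)
      ((hBc i (Finset.mem_univ i)).2.symm) (by rw [hcardn]; omega)
    choose gP hsign hg using hg
    set g : Fin (n-2) → ↥(alternatingGroup (Fin n)) :=
      fun i => ⟨gP i, Equiv.Perm.mem_alternatingGroup.mpr (hsign i)⟩ with hgdef
    have hgact : ∀ i x, (g i) • x ∈ B i ↔ x ∈ O i := by
      intro i x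
      show (gP i) x ∈ B i ↔ x ∈ O i
      exact hg i x
    refine ⟨g, ?_⟩
    rw [Subgroup.eq_bot_iff_forall]
    intro σ hσ
    rw [Subgroup.mem_iInf] at hσ
    have hrows : ∀ z, (↑σ : Equiv.Perm (Fin n)) z = z ∨
        ((↑σ : Equiv.Perm (Fin n)) z = p ∧ z = q) ∨
        ((↑σ : Equiv.Perm (Fin n)) z = q ∧ z = p) := by
      intro z
      refine hinj ((↑σ : Equiv.Perm (Fin n)) z) (Finset.mem_univ _) z (Finset.mem_univ _) ?_
      intro i _
      exact stab_conj (H i) (O i) (B i) (hO3 i) (g i) (hgact i) σ (hσ i) z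
    by_cases hfix : ∀ z, (↑σ : Equiv.Perm (Fin n)) z = z
    · exact Subtype.ext (Equiv.ext hfix)
    · exfalso
      push_neg at hfix
      obtain ⟨z, hz⟩ := hfix
      have hsσ : Equiv.Perm.sign (↑σ : Equiv.Perm (Fin n)) = 1 :=
        Equiv.Perm.mem_alternatingGroup.mp σ.2
      rcases hrows z with h | h | h
      · exact hz h
      · -- σ q = p with p ≠ q
        have hpq : p ≠ q := fun hh => hz (h.1.trans (hh.trans h.2.symm))
        have hq' : (↑σ : Equiv.Perm (Fin n)) q = p := by rw [← h.2]; exact h.1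
        have := eq_swap_of_rows _ p q hpq hq' hrows
        rw [this, Equiv.Perm.sign_swap hpq] at hsσ
        exact absurd hsσ (by decide)
      · have hqp : q ≠ p := fun hh => hz (h.1.trans (hh.trans h.2.symm))
        have hq' : (↑σ : Equiv.Perm (Fin n)) p = q := by rw [← h.2]; exact h.1
        have := eq_swap_of_rows _ q p hqp hq' (by
          intro w
          rcases hrows w with h' | h' | h'
          · exact Or.inl h'
          · exact Or.inr (Or.inr h')
          · exact Or.inr (Or.inl h'))
        rw [this, Equiv.Perm.sign_swap hqp] at hsσ
        exact absurd hsσ (by decide)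
  · -- part 4 : stabiliser in Aₙ
    intro a
    constructor
    · intro htrans
      obtain ⟨b, hb⟩ := exists_ne a
      obtain ⟨u, hu⟩ := htrans.exists_smul_eq a b
      have h1 : (↑u : ↥(alternatingGroup (Fin n))) • a = a := u.2
      have h2 : u • a = (↑u : ↥(alternatingGroup (Fin n))) • a := rfl
      rw [h2, h1] at hu
      exact hb hu.symm
    · intro g hbot
      set gP : Fin (n-3) → Equiv.Perm (Fin n) := fun i => ↑(g i) with hgPdef
      set S : Finset (Fin n) := Finset.univ.image (fun i => gP i a) with hSdef
      have hScard : S.card ≤ n - 3 := le_trans Finset.card_image_le (by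
        rw [Finset.card_univ, Fintype.card_fin])
      have h2 : 2 < Sᶜ.card := by
        rw [Finset.card_compl, hcardn]; omega
      obtain ⟨u, hu, v, hv, w, hw, huv, huw, hvw⟩ := Finset.two_lt_card.mp h2
      rw [Finset.mem_compl] at hu hv hw
      have hmemS : ∀ i, gP i a ∈ S := fun i =>
        Finset.mem_image.mpr ⟨i, Finset.mem_univ i, rfl⟩
      set c₀ : Equiv.Perm (Fin n) := Equiv.swap u v * Equiv.swap v w with hc₀def
      have hc₀sign : Equiv.Perm.sign c₀ = 1 := by
        rw [hc₀def, map_mul, Equiv.Perm.sign_swap huv, Equiv.Perm.sign_swap hvw]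
        decide
      set c : ↥(alternatingGroup (Fin n)) :=
        ⟨c₀, Equiv.Perm.mem_alternatingGroup.mpr hc₀sign⟩ with hcdef
      have hc₀fix : ∀ x, x ≠ u → x ≠ v → x ≠ w → c₀ x = x := by
        intro x hxu hxv hxw
        rw [hc₀def, Equiv.Perm.mul_apply, Equiv.swap_apply_of_ne_of_ne hxv hxw,
          Equiv.swap_apply_of_ne_of_ne hxu hxv]
      have hmem : c ∈ ⨅ i, conjSub (g i)
          (MulAction.stabilizer ↥(alternatingGroup (Fin n)) a) := by
        rw [Subgroup.mem_iInf]
        intro i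
        rw [mem_conjSub]
        refine ⟨(g i)⁻¹ * c * g i, ?_, by group⟩
        rw [MulAction.mem_stabilizer_iff]
        show (↑((g i)⁻¹ * c * g i) : Equiv.Perm (Fin n)) a = a
        have hcoe : (↑((g i)⁻¹ * c * g i) : Equiv.Perm (Fin n))
            = (gP i)⁻¹ * c₀ * gP i := rfl
        rw [hcoe]
        show ((gP i)⁻¹ * (c₀ * gP i)) a = a
        rw [Equiv.Perm.mul_apply, Equiv.Perm.mul_apply,
          hc₀fix _ (fun h => hu (by rw [← h]; exact hmemS i)) (fun h => hv (by rw [← h]; exact hmemS i))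
            (fun h => hw (by rw [← h]; exact hmemS i)),
          ← Equiv.Perm.mul_apply, inv_mul_cancel, Equiv.Perm.one_apply]
      rw [hbot, Subgroup.mem_bot] at hmem
      have hc₀1 : c₀ = 1 := by
        have := congrArg (Subtype.val) hmem
        exact this
      have : c₀ w = w := by rw [hc₀1]; rfl
      rw [hc₀def, Equiv.Perm.mul_apply, Equiv.swap_apply_right,
        Equiv.swap_apply_right] at this
      exact huw this
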